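/- For a prime p > 2 and a positive integer t, the fundamental period of p^(t+1) equals either the fundamental period of p^t or p times the fundamental period of p^t. -/

import Mathlib

noncomputable def fundPeriod (K : ℕ) : ℕ := sInf {k : ℕ | 0 < k ∧ K ∣ Nat.fib k}

lemma exists_fib_dvd (K : ℕ) (hK : 0 < K) : ∃ k, 0 < k ∧ K ∣ Nat.fib k := by
  haveI : NeZero K := ⟨hK.ne'⟩
  obtain ⟨i, j, hij, hfe⟩ := Finite.exists_ne_map_eq_of_infinite
    (fun n : ℕ => ((Nat.fib n : ZMod K), (Nat.fib (n+1) : ZMod K)))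
  wlog hlt : i < j generalizing i j
  · exact this j i hij.symm hfe.symm (by omega)
  have hfib : ∀ n : ℕ, (Nat.fib n : ZMod K) = (Nat.fib (n+2) : ZMod K) - (Nat.fib (n+1) : ZMod K) := by
    intro n
    have := Nat.fib_add_two (n := n)
    have : (Nat.fib (n+2) : ZMod K) = (Nat.fib n : ZMod K) + (Nat.fib (n+1) : ZMod K) := by
      rw [this]; push_cast; ring
    rw [this]; ring
  have key : ∀ l, l ≤ i → ((Nat.fib (i - l) : ZMod K) = (Nat.fib (j - l) : ZMod K) ∧
      (Nat.fib (i - l + 1) : ZMod K) = (Nat.fib (j - l + 1) : ZMod K)) := by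
    intro l
    induction l with
    | zero =>
      intro _
      simp only [Nat.sub_zero]
      exact ⟨congrArg Prod.fst hfe, congrArg Prod.snd hfe⟩
    | succ l ih =>
      intro hl
      obtain ⟨h1, h2⟩ := ih (by omega)
      have e1 : i - (l+1) + 1 = i - l := by omega
      have e2 : j - (l+1) + 1 = j - l := by omega
      have e3 : i - (l+1) + 2 = i - l + 1 := by omega
      have e4 : j - (l+1) + 2 = j - l + 1 := by omega
      constructor
      · rw [hfib (i - (l+1)), hfib (j - (l+1)), e1, e2, e3, e4, h1, h2]
      · rw [e1, e2]; exact h1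
  obtain ⟨h1, _⟩ := key i le_rfl
  simp only [Nat.sub_self, Nat.fib_zero, Nat.cast_zero] at h1
  refine ⟨j - i, by omega, ?_⟩
  exact (ZMod.natCast_eq_zero_iff _ _).mp h1.symm

lemma fundPeriod_spec (K : ℕ) (hK : 0 < K) :
    0 < fundPeriod K ∧ K ∣ Nat.fib (fundPeriod K) :=
  Nat.sInf_mem (exists_fib_dvd K hK)

lemma dvd_fib_iff (K : ℕ) (hK : 0 < K) (n : ℕ) :
    K ∣ Nat.fib n ↔ fundPeriod K ∣ n := by
  obtain ⟨hpos, hdvd⟩ := fundPeriod_spec K hK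
  constructor
  · intro h
    rcases Nat.eq_zero_or_pos n with rfl | hn
    · exact dvd_zero _
    have hg : K ∣ Nat.fib (Nat.gcd (fundPeriod K) n) := by
      rw [Nat.fib_gcd]; exact Nat.dvd_gcd hdvd h
    have hgpos : 0 < Nat.gcd (fundPeriod K) n := Nat.gcd_pos_of_pos_right _ hn
    have hle : fundPeriod K ≤ Nat.gcd (fundPeriod K) n := Nat.sInf_le ⟨hgpos, hg⟩
    have hge : Nat.gcd (fundPeriod K) n ≤ fundPeriod K :=
      Nat.le_of_dvd hpos (Nat.gcd_dvd_left _ _)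
    have : Nat.gcd (fundPeriod K) n = fundPeriod K := le_antisymm hge hle
    rw [← this]; exact Nat.gcd_dvd_right _ _
  · intro h
    exact dvd_trans hdvd (Nat.fib_dvd _ _ h)

lemma fib_mul_key (m : ℕ) (hm : 0 < m) (k : ℕ) :
    ((Nat.fib m : ℤ))^2 ∣ (Nat.fib ((k+1)*m) : ℤ)
        - (k+1) * (Nat.fib m) * (Nat.fib (m+1))^k ∧
    ((Nat.fib m : ℤ))^2 ∣ (Nat.fib ((k+1)*m + 1) : ℤ) - (Nat.fib (m+1))^(k+1) := by
  have hm1 : m - 1 + 1 = m := by omega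
  have hfibm1 : (Nat.fib (m-1) : ℤ) = (Nat.fib (m+1) : ℤ) - (Nat.fib m : ℤ) := by
    have h2 := Nat.fib_add_two (n := m - 1)
    rw [hm1, show (m-1)+2 = m+1 from by omega] at h2
    push_cast [h2]; ring
  induction k with
  | zero => simp
  | succ k ih =>
    obtain ⟨⟨α, hα⟩, ⟨β, hβ⟩⟩ := ih
    have hadd1 : Nat.fib ((k+2)*m) =
        Nat.fib ((k+1)*m) * Nat.fib (m-1) + Nat.fib ((k+1)*m + 1) * Nat.fib m := by
      have := Nat.fib_add ((k+1)*m) (m-1)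
      rw [show (k+1)*m + (m-1) + 1 = (k+2)*m from by ring_nf; omega] at this
      rw [this, hm1]
    have hadd2 : Nat.fib ((k+2)*m + 1) =
        Nat.fib ((k+1)*m) * Nat.fib m + Nat.fib ((k+1)*m + 1) * Nat.fib (m+1) := by
      have := Nat.fib_add ((k+1)*m) m
      rw [show (k+1)*m + m + 1 = (k+2)*m + 1 from by ring] at this
      rw [this]
    have ha : (Nat.fib ((k+1)*m) : ℤ) =
        (k+1) * (Nat.fib m) * (Nat.fib (m+1))^k + (Nat.fib m)^2 * α := by linarith [hα]
    have hb : (Nat.fib ((k+1)*m + 1) : ℤ) =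
        (Nat.fib (m+1))^(k+1) + (Nat.fib m)^2 * β := by linarith [hβ]
    constructor
    · refine ⟨-(k+1) * (Nat.fib (m+1))^k + α * ((Nat.fib (m+1)) - Nat.fib m)
        + Nat.fib m * β, ?_⟩
      have : (Nat.fib ((k+2)*m) : ℤ) =
          (Nat.fib ((k+1)*m) : ℤ) * ((Nat.fib (m+1) : ℤ) - Nat.fib m)
          + (Nat.fib ((k+1)*m + 1) : ℤ) * Nat.fib m := by
        rw [← hfibm1]; exact_mod_cast congrArg (Nat.cast : ℕ → ℤ) hadd1
      rw [this, ha, hb]; push_cast; ring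
    · refine ⟨((k:ℤ)+1) * (Nat.fib (m+1))^k + (Nat.fib m) * α
        + (Nat.fib (m+1)) * β, ?_⟩
      have : (Nat.fib ((k+2)*m + 1) : ℤ) =
          (Nat.fib ((k+1)*m) : ℤ) * Nat.fib m
          + (Nat.fib ((k+1)*m + 1) : ℤ) * Nat.fib (m+1) := by
        exact_mod_cast congrArg (Nat.cast : ℕ → ℤ) hadd2
      rw [this, ha, hb]; push_cast; ring

theorem fundPeriod_prime_pow (p : ℕ) (hp : p.Prime) (hp2 : 2 < p) (t : ℕ) (ht : 0 < t) :
    fundPeriod (p ^ (t + 1)) = fundPeriod (p ^ t) ∨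
    fundPeriod (p ^ (t + 1)) = p * fundPeriod (p ^ t) := by
  have hppos := hp.pos
  have hpt : 0 < p ^ t := Nat.pow_pos hppos
  have hpt1 : 0 < p ^ (t+1) := Nat.pow_pos hppos
  set m := fundPeriod (p ^ t) with hmdef
  set M := fundPeriod (p ^ (t+1)) with hMdef
  obtain ⟨hmpos, hmdvd⟩ := fundPeriod_spec (p ^ t) hpt
  obtain ⟨hMpos, hMdvd⟩ := fundPeriod_spec (p ^ (t+1)) hpt1
  -- p^(t+1) ∣ fib (p * m)
  obtain ⟨hk1, _⟩ := fib_mul_key m hmpos (p - 1)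
  rw [show (p - 1) + 1 = p from by omega] at hk1
  have hc : ((p - 1 : ℕ) : ℤ) + 1 = (p : ℤ) := by omega
  rw [hc] at hk1
  have hdvd2 : (p : ℤ)^(t+1) ∣ ((Nat.fib m : ℤ))^2 := by
    have h1 : (p : ℤ)^t ∣ (Nat.fib m : ℤ) := by exact_mod_cast hmdvd
    calc (p:ℤ)^(t+1) ∣ (p:ℤ)^(2*t) := pow_dvd_pow _ (by omega)
      _ = ((p:ℤ)^t)^2 := by ring
      _ ∣ ((Nat.fib m : ℤ))^2 := pow_dvd_pow_of_dvd h1 2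
  have hdvdp : (p : ℤ)^(t+1) ∣ (p : ℤ) * (Nat.fib m) * (Nat.fib (m+1))^(p-1) := by
    have h1 : (p : ℤ)^t ∣ (Nat.fib m : ℤ) := by exact_mod_cast hmdvd
    have : (p:ℤ)^(t+1) ∣ (p:ℤ) * (Nat.fib m) := by
      rw [pow_succ']
      exact mul_dvd_mul_left _ h1
    exact Dvd.dvd.mul_right this _
  have hfibpm : (p : ℤ)^(t+1) ∣ (Nat.fib (p * m) : ℤ) := by
    have := dvd_add (dvd_trans hdvd2 hk1) hdvdp
    simpa using this
  have hfibpmN : p^(t+1) ∣ Nat.fib (p * m) := by exact_mod_cast hfibpm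
  have hMdvdpm : M ∣ p * m := (dvd_fib_iff _ hpt1 _).mp hfibpmN
  have hmM : m ∣ M :=
    (dvd_fib_iff _ hpt M).mp (dvd_trans (pow_dvd_pow p (Nat.le_succ t)) hMdvd)
  obtain ⟨d, hd⟩ := hmM
  have hdp : d ∣ p := by
    have : m * d ∣ m * p := by rw [← hd, mul_comm m p]; exact hMdvdpm
    exact (mul_dvd_mul_iff_left hmpos.ne').mp this
  rcases (Nat.Prime.eq_one_or_self_of_dvd hp d hdp) with rfl | rfl
  · left; rw [hd]; simp
  · right; rw [hd]; ring
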